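/- For every z₀ with 0 ≤ z₀ < 1, the integral √2 · ∫₀^{z₀} √(1+z²)/(1−z²) dz equals 2·artanh(√2·z₀/√(1+z₀²)) − √2·artanh(z₀/√(1+z₀²)). -/

import Mathlib

open Real

noncomputable def artanh (x : ℝ) : ℝ := (1 / 2) * Real.log ((1 + x) / (1 - x))

lemma hasDerivAt_artanh {x : ℝ} (h : x ^ 2 < 1) :
    HasDerivAt _root_.artanh (1 / (1 - x ^ 2)) x := by
  have hx1 : 0 < 1 - x := by nlinarith
  have hx2 : 0 < 1 + x := by nlinarith
  have hq : HasDerivAt (fun x : ℝ => (1 + x) / (1 - x)) (2 / (1 - x) ^ 2) x := by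
    have h1 : HasDerivAt (fun x : ℝ => 1 + x) 1 x := (hasDerivAt_id x).const_add 1
    have h2 : HasDerivAt (fun x : ℝ => 1 - x) (-1) x := (hasDerivAt_id x).const_sub 1
    have := h1.div h2 hx1.ne'
    refine this.congr_deriv (Eq.symm ?_)
    field_simp
    ring
  have hlog := (Real.hasDerivAt_log (div_pos hx2 hx1).ne').comp x hq
  have := hlog.const_mul (1 / 2 : ℝ)
  have h1x : (1:ℝ) - x ^ 2 ≠ 0 := by nlinarith
  refine this.congr_deriv (Eq.symm ?_)
  field_simp
  ring
noncomputable def F (z : ℝ) : ℝ :=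
  2 * _root_.artanh (Real.sqrt 2 * z / Real.sqrt (1 + z ^ 2)) -
    Real.sqrt 2 * _root_.artanh (z / Real.sqrt (1 + z ^ 2))

lemma hasDerivAt_F {z : ℝ} (hz : z ^ 2 < 1) :
    HasDerivAt F (Real.sqrt 2 * (Real.sqrt (1 + z ^ 2) / (1 - z ^ 2))) z := by
  set s := Real.sqrt (1 + z ^ 2) with hs_def
  have hpos : (0:ℝ) < 1 + z ^ 2 := by positivity
  have hs0 : 0 < s := Real.sqrt_pos.mpr hpos
  have hs2 : s ^ 2 = 1 + z ^ 2 := Real.sq_sqrt hpos.le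
  have h2 : (Real.sqrt 2) ^ 2 = 2 := Real.sq_sqrt (by norm_num)
  have hs : HasDerivAt (fun z : ℝ => Real.sqrt (1 + z ^ 2)) (z / s) z := by
    have hinner : HasDerivAt (fun z : ℝ => 1 + z ^ 2) (2 * z) z := by
      simpa using ((hasDerivAt_pow 2 z).const_add 1)
    have := (Real.hasDerivAt_sqrt hpos.ne').comp z hinner
    refine this.congr_deriv (Eq.symm ?_)
    field_simp
    ring
  have hg : HasDerivAt (fun z : ℝ => z / Real.sqrt (1 + z ^ 2)) (1 / (s * (1 + z ^ 2))) z := by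
    have := (hasDerivAt_id z).div hs hs0.ne'
    refine this.congr_deriv (Eq.symm ?_)
    rw [show Real.sqrt (1+z^2) = s from rfl]
    simp only [id]
    field_simp
    linear_combination (-z ^ 2) * hs2
  have hh : HasDerivAt (fun z : ℝ => Real.sqrt 2 * z / Real.sqrt (1 + z ^ 2))
      (Real.sqrt 2 * (1 / (s * (1 + z ^ 2)))) z := by
    have := hg.const_mul (Real.sqrt 2)
    refine HasDerivAt.congr_of_eventuallyEq this (Filter.Eventually.of_forall fun y => ?_)
    dsimp only
    ring
  have hb1 : (z / s) ^ 2 < 1 := by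
    rw [div_pow, hs2, div_lt_one hpos]; linarith
  have hb2 : (Real.sqrt 2 * z / s) ^ 2 < 1 := by
    rw [div_pow, mul_pow, h2, hs2, div_lt_one hpos]; linarith
  have d1 := (hasDerivAt_artanh hb1).comp z hg
  have d2 := (hasDerivAt_artanh hb2).comp z hh
  have := (d2.const_mul (2:ℝ)).sub (d1.const_mul (Real.sqrt 2))
  refine this.congr_deriv (Eq.symm ?_)
  have h1z : (1:ℝ) - z ^ 2 ≠ 0 := by nlinarith
  have e1 : 1 - (z / s) ^ 2 = 1 / (1 + z ^ 2) := by
    rw [div_pow, hs2]; field_simp; ring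
  have e2 : 1 - (Real.sqrt 2 * z / s) ^ 2 = (1 - z ^ 2) / (1 + z ^ 2) := by
    rw [div_pow, mul_pow, h2, hs2]; field_simp; ring
  rw [e1, e2, one_div_div, one_div_one_div]
  field_simp
  linear_combination hs2

/-- **Arc-length integral identity for the two-level reset map.**
For `0 ≤ z₀ < 1`,
`√2 ∫₀^{z₀} √(1+z²)/(1−z²) dz = 2 artanh(√2 z₀/√(1+z₀²)) − √2 artanh(z₀/√(1+z₀²))`. -/
theorem arc_length_integral_identity (z₀ : ℝ) (h0 : 0 ≤ z₀) (h1 : z₀ < 1) :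
    Real.sqrt 2 * ∫ z in (0:ℝ)..z₀, Real.sqrt (1 + z ^ 2) / (1 - z ^ 2) =
      2 * _root_.artanh (Real.sqrt 2 * z₀ / Real.sqrt (1 + z₀ ^ 2)) -
        Real.sqrt 2 * _root_.artanh (z₀ / Real.sqrt (1 + z₀ ^ 2)) := by
  have key : ∫ z in (0:ℝ)..z₀, Real.sqrt 2 * (Real.sqrt (1 + z ^ 2) / (1 - z ^ 2)) =
      F z₀ - F 0 := by
    apply intervalIntegral.integral_eq_sub_of_hasDerivAt
    · intro z hz
      rw [Set.uIcc_of_le h0] at hz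
      exact hasDerivAt_F (by nlinarith [hz.1, hz.2])
    · apply ContinuousOn.intervalIntegrable
      apply ContinuousOn.mul continuousOn_const
      apply ContinuousOn.div
      · exact (continuous_const.add (continuous_pow 2)).sqrt.continuousOn
      · exact (continuous_const.sub (continuous_pow 2)).continuousOn
      · intro z hz
        rw [Set.uIcc_of_le h0] at hz
        nlinarith [hz.1, hz.2]
  have hF0 : F 0 = 0 := by
    simp [F, _root_.artanh]
  rw [intervalIntegral.integral_const_mul] at key
  rw [key, hF0]
  simp [F]
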